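/- arXiv:math/9909009 — 2 statements merged into one kernel-verified Lean document; each statement's English description precedes it below -/
import Mathlib

section
/- Let F be a field and g ∈ F[x_1,…,x_n] a homogeneous polynomial of degree δ, where δ is invertible in F (i.e. the characteristic of F does not divide δ). Let ω ∈ Ω^k be a homogeneous k-form such that dg ∧ ω = 0. Then there exists a homogeneous (k-1)-form α ∈ Ω^{k-1} such that g·ω = dg ∧ α. -/
set_option synthInstance.maxHeartbeats 1000000
set_option maxHeartbeats 1000000
open MvPolynomial

/-- The polynomial ring `𝔽_q[x_1,…,x_n]`. -/
abbrev PolyRing (F : Type) [Field F] (n : ℕ) : Type := MvPolynomial (Fin n) F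

/-- The exterior algebra over `R = F[x_1,…,x_n]` of the free module on `dx_1,…,dx_n`;
the module of differential `k`-forms `Ω^k` is its degree-`k` part. -/
abbrev FormAlgebra (F : Type) [Field F] (n : ℕ) : Type :=
  ExteriorAlgebra (PolyRing F n) (Fin n → PolyRing F n)

/-- `dg = Σ_i (∂g/∂x_i) dx_i` as an element of the exterior algebra. -/
noncomputable def dform {F : Type} [Field F] {n : ℕ} (g : PolyRing F n) : FormAlgebra F n :=
  ExteriorAlgebra.ι (PolyRing F n) (fun j => MvPolynomial.pderiv j g)

/-- `c · dx_{s 0} ∧ ⋯ ∧ dx_{s (k-1)}`. -/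
noncomputable def wedgeMonomial {F : Type} [Field F] {n : ℕ} (k : ℕ) (s : Fin k → Fin n)
    (c : PolyRing F n) : FormAlgebra F n :=
  c • (List.ofFn fun i => ExteriorAlgebra.ι (PolyRing F n)
        (Pi.single (s i) (1 : PolyRing F n))).prod

/-- `ω` is a differential `k`-form, i.e. an `R`-linear combination of `k`-fold wedge
products of the `dx_i`. -/
def IsForm {F : Type} [Field F] {n : ℕ} (k : ℕ) (ω : FormAlgebra F n) : Prop :=
  ω ∈ AddSubgroup.closure {x | ∃ (s : Fin k → Fin n) (c : PolyRing F n), x = wedgeMonomial k s c}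

/-- `ω` is a homogeneous `k`-form whose coefficients are homogeneous polynomials of degree `d`. -/
def IsHomogeneousForm {F : Type} [Field F] {n : ℕ} (k d : ℕ) (ω : FormAlgebra F n) : Prop :=
  ω ∈ AddSubgroup.closure {x | ∃ (s : Fin k → Fin n) (c : PolyRing F n),
    c.IsHomogeneous d ∧ x = wedgeMonomial k s c}

/-- The system of homogeneous equations `g i = 0` defines a smooth complete intersection
in `P^{n-1}`: over an algebraic closure, the only common zero of the `g i` in affine
`n`-space at which the differentials `d(g i)` are linearly dependent is the origin. -/
def IsSmoothCI {F : Type} [Field F] {n : ℕ} {ι : Type} (g : ι → PolyRing F n) : Prop :=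
  ∀ x : Fin n → AlgebraicClosure F,
    (∀ i, MvPolynomial.eval x
      (MvPolynomial.map (algebraMap F (AlgebraicClosure F)) (g i)) = 0) →
    ¬ LinearIndependent (AlgebraicClosure F)
      (fun i => fun j : Fin n => MvPolynomial.eval x
        (MvPolynomial.map (algebraMap F (AlgebraicClosure F)) (MvPolynomial.pderiv j (g i)))) →
    x = 0

/-- `df_{i_1} ∧ ⋯ ∧ df_{i_l}` for the increasing enumeration `i_1 < ⋯ < i_l` of `s`. -/
noncomputable def dWedge {F : Type} [Field F] {n : ℕ} {r : ℕ} (g : Fin r → PolyRing F n)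
    (s : Finset (Fin r)) : FormAlgebra F n :=
  ((s.sort (· ≤ ·)).map fun i => dform (g i)).prod

/-- The polynomial form `(Σ_i a_i (∏_j f_j^{expo j}) df_i/f_i) ∧ Ω_{i_1⋯i_l}`, where
`Ω_{i_1⋯i_l} = (df_{i_1}/f_{i_1}) ∧ ⋯ ∧ (df_{i_l}/f_{i_l})` and `s = {i_1 < ⋯ < i_l}`;
all denominators cancel provided `expo j ≥ 1` for all `j`. -/
noncomputable def clearedThetaOmega {F : Type} [Field F] {n : ℕ} {r : ℕ}
    (g : Fin r → PolyRing F n) (a : Fin r → ℕ) (expo : Fin r → ℕ) (s : Finset (Fin r)) :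
    FormAlgebra F n :=
  ∑ i ∈ sᶜ, ((a i : PolyRing F n) *
      ∏ j, g j ^ (expo j - (if j ∈ insert i s then 1 else 0))) • (dform (g i) * dWedge g s)

/-! ### Auxiliary material: contraction with the Euler vector field -/

/-- The dual vector `v ↦ Σ_i x_i v_i`, i.e. contraction data for the Euler vector field. -/
noncomputable def eulerDual {F : Type} [Field F] {n : ℕ} :
    Module.Dual (PolyRing F n) (Fin n → PolyRing F n) :=
  ∑ i : Fin n, (X i : PolyRing F n) • LinearMap.proj i

lemma eulerDual_apply {F : Type} [Field F] {n : ℕ} (v : Fin n → PolyRing F n) :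
    eulerDual v = ∑ i : Fin n, X i * v i := by
  simp [eulerDual, LinearMap.sum_apply]

lemma eulerDual_single {F : Type} [Field F] {n : ℕ} (j : Fin n) :
    eulerDual (Pi.single j (1 : PolyRing F n)) = X j := by
  rw [eulerDual_apply]
  rw [Finset.sum_eq_single j]
  · simp
  · intro i _ hij
    simp [Pi.single_apply, hij.symm]
  · simp

/-- Euler's identity for a single monomial. -/
lemma euler_monomial {F : Type} [Field F] {n : ℕ} (m : Fin n →₀ ℕ) (a : F) :
    ∑ i : Fin n, X i * pderiv i (monomial m a) =
      monomial m ((((∑ i : Fin n, m i : ℕ) : F)) * a) := by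
  have : ∀ i : Fin n, X i * pderiv i (monomial m a) = monomial m (((m i : ℕ) : F) * a) := by
    intro i
    rw [pderiv_monomial]
    rcases Nat.eq_zero_or_pos (m i) with h | h
    · simp [h]
    · rw [X, monomial_mul, one_mul, mul_comm a]
      congr 1
      have hle : Finsupp.single i 1 ≤ m := by
        rw [Finsupp.single_le_iff]; exact h
      rw [add_comm, tsub_add_cancel_of_le hle]
  rw [Finset.sum_congr rfl fun i _ => this i, ← map_sum]
  congr 1
  push_cast
  rw [Finset.sum_mul]

/-- Euler's identity. -/
lemma euler_identity {F : Type} [Field F] {n : ℕ} {g : PolyRing F n} {δ : ℕ}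
    (hg : g.IsHomogeneous δ) :
    ∑ i : Fin n, X i * pderiv i g = C ((δ : F)) * g := by
  conv_lhs => rw [g.as_sum]
  conv_rhs => rw [g.as_sum]
  rw [Finset.mul_sum]
  have swap : ∑ i : Fin n, X i * pderiv i (∑ m ∈ g.support, monomial m (coeff m g)) =
      ∑ m ∈ g.support, ∑ i : Fin n, X i * pderiv i (monomial m (coeff m g)) := by
    simp_rw [map_sum, Finset.mul_sum]
    exact Finset.sum_comm
  rw [swap]
  refine Finset.sum_congr rfl fun m hm => ?_
  rw [euler_monomial, C_mul_monomial]
  congr 2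
  have hcoeff : coeff m g ≠ 0 := MvPolynomial.mem_support_iff.mp hm
  have := hg hcoeff
  rw [Finsupp.weight_apply] at this
  rw [← this, Finsupp.sum_fintype]
  · simp
  · intro _; rfl

/-- Multiplying a homogeneous `k`-form by `dx_j` yields a homogeneous `(k+1)`-form. -/
lemma mul_dx_mem {F : Type} [Field F] {n : ℕ} {k d : ℕ} (j : Fin n) {ω : FormAlgebra F n}
    (h : IsHomogeneousForm k d ω) :
    IsHomogeneousForm (k + 1) d
      (ExteriorAlgebra.ι (PolyRing F n) (Pi.single j (1 : PolyRing F n)) * ω) := by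
  unfold IsHomogeneousForm at h ⊢
  induction h using AddSubgroup.closure_induction with
  | mem x hx =>
    obtain ⟨s, c, hc, rfl⟩ := hx
    refine AddSubgroup.subset_closure ⟨Fin.cons j s, c, hc, ?_⟩
    unfold wedgeMonomial
    rw [mul_smul_comm]
    congr 1
    rw [List.ofFn_succ, List.prod_cons]
    simp [Fin.cons_zero, Fin.cons_succ]
  | zero => simpa using AddSubgroup.zero_mem _
  | add x y _ _ hx hy => rw [mul_add]; exact AddSubgroup.add_mem _ hx hy
  | neg x _ hx => rw [mul_neg]; exact AddSubgroup.neg_mem _ hx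

/-- Scaling a homogeneous form by a constant keeps it homogeneous. -/
lemma C_smul_mem {F : Type} [Field F] {n : ℕ} {k d : ℕ} (r : F) {ω : FormAlgebra F n}
    (h : IsHomogeneousForm k d ω) :
    IsHomogeneousForm k d ((C r : PolyRing F n) • ω) := by
  unfold IsHomogeneousForm at h ⊢
  induction h using AddSubgroup.closure_induction with
  | mem x hx =>
    obtain ⟨s, c, hc, rfl⟩ := hx
    refine AddSubgroup.subset_closure ⟨s, C r * c, hc.C_mul r, ?_⟩
    unfold wedgeMonomial
    rw [smul_smul]
  | zero => simpa using AddSubgroup.zero_mem _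
  | add x y _ _ hx hy => rw [smul_add]; exact AddSubgroup.add_mem _ hx hy
  | neg x _ hx => rw [smul_neg]; exact AddSubgroup.neg_mem _ hx

/-- Contraction of a wedge of basis one-forms, scaled by a degree-`d` homogeneous
coefficient, is a homogeneous form of one smaller arity and one larger degree. -/
lemma contract_list_mem {F : Type} [Field F] {n : ℕ} {d : ℕ} :
    ∀ (l : List (Fin n)) (c : PolyRing F n), c.IsHomogeneous d →
      IsHomogeneousForm (l.length - 1) (d + 1)
        (c • (CliffordAlgebra.contractLeft (eulerDual (F := F) (n := n))
          ((l.map fun j => ExteriorAlgebra.ι (PolyRing F n)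
            (Pi.single j (1 : PolyRing F n))).prod))) := by
  intro l
  induction l with
  | nil =>
    intro c hc
    simp only [List.map_nil, List.prod_nil, CliffordAlgebra.contractLeft_one, smul_zero]
    exact AddSubgroup.zero_mem _
  | cons j t ih =>
    intro c hc
    rcases t with _ | ⟨j', t'⟩
    · -- single element
      simp only [List.map_cons, List.map_nil, List.prod_cons, List.prod_nil, mul_one]
      rw [CliffordAlgebra.contractLeft_ι, eulerDual_single,
        Algebra.algebraMap_eq_smul_one, smul_smul]
      refine AddSubgroup.subset_closure ⟨Fin.elim0, c * X j,
        hc.mul (isHomogeneous_X F j), ?_⟩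
      unfold wedgeMonomial
      simp
    · set t : List (Fin n) := j' :: t' with ht
      rw [List.map_cons, List.prod_cons, CliffordAlgebra.contractLeft_ι_mul,
        eulerDual_single, smul_sub, smul_comm c (X j), smul_smul, ← mul_smul_comm]
      have hlen : (j :: t).length - 1 = t.length := rfl
      rw [hlen]
      refine AddSubgroup.sub_mem _ ?_ ?_
      · -- X j • c • prod  =  wedgeMonomial t.length (t.get) (X j * c)
        refine AddSubgroup.subset_closure ⟨t.get, X j * c,
          by rw [mul_comm]; exact hc.mul (isHomogeneous_X F j), ?_⟩
        unfold wedgeMonomial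
        congr 1
        have : (List.ofFn fun i => ExteriorAlgebra.ι (PolyRing F n)
            (Pi.single (t.get i) (1 : PolyRing F n))) =
            t.map fun j => ExteriorAlgebra.ι (PolyRing F n)
              (Pi.single j (1 : PolyRing F n)) := by
          rw [← List.ofFn_get t, List.map_ofFn, List.ofFn_get]
          rfl
        rw [this]
      · have h2 := ih c hc
        have h3 := mul_dx_mem j h2
        have : t.length - 1 + 1 = t.length := by rw [ht]; simp
        rwa [this] at h3

/-- Contraction with the Euler vector field sends homogeneous `k`-forms of degree `d`
to homogeneous `(k-1)`-forms of degree `d+1`. -/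
lemma contract_mem {F : Type} [Field F] {n : ℕ} {k d : ℕ} {ω : FormAlgebra F n}
    (h : IsHomogeneousForm k d ω) :
    IsHomogeneousForm (k - 1) (d + 1)
      (CliffordAlgebra.contractLeft (eulerDual (F := F) (n := n)) ω) := by
  unfold IsHomogeneousForm at h
  induction h using AddSubgroup.closure_induction with
  | mem x hx =>
    obtain ⟨s, c, hc, rfl⟩ := hx
    unfold wedgeMonomial
    rw [map_smul]
    have := contract_list_mem (List.ofFn s) c hc
    rw [List.length_ofFn] at this
    rw [List.map_ofFn] at this
    exact this
  | zero => simpa [IsHomogeneousForm] using AddSubgroup.zero_mem _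
  | add x y _ _ hx hy =>
    rw [map_add]; exact AddSubgroup.add_mem _ hx hy
  | neg x _ hx =>
    rw [map_neg]; exact AddSubgroup.neg_mem _ hx

/-- If `g` is homogeneous of degree `δ` with `δ` invertible in `F`, and `ω` is a homogeneous
`k`-form with `dg ∧ ω = 0`, then `g·ω = dg ∧ α` for some homogeneous `(k-1)`-form `α`. -/
theorem de_rham_division_by_dg {F : Type} [Field F] {n : ℕ} (g : MvPolynomial (Fin n) F)
    (δ : ℕ) (hg : g.IsHomogeneous δ) (hδ : (δ : F) ≠ 0)
    (k d : ℕ) (ω : FormAlgebra F n) (hω : IsHomogeneousForm k d ω)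
    (hker : dform g * ω = 0) :
    ∃ (e : ℕ) (α : FormAlgebra F n), IsHomogeneousForm (k - 1) e α ∧ g • ω = dform g * α := by
  set D : Module.Dual (PolyRing F n) (Fin n → PolyRing F n) := eulerDual with hD
  have h0 : CliffordAlgebra.contractLeft D (dform g * ω) = 0 := by
    rw [hker, map_zero]
  rw [dform, CliffordAlgebra.contractLeft_ι_mul] at h0
  have hEuler : D (fun j => pderiv j g) = C ((δ : F)) * g := by
    rw [hD, eulerDual_apply]
    exact euler_identity hg
  rw [hEuler, sub_eq_zero] at h0
  -- h0 : (C δ * g) • ω = dg * (D ⌋ ω)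
  have h0' : (C ((δ : F)) * g) • ω = dform g * CliffordAlgebra.contractLeft D ω := h0
  refine ⟨d + 1, (C ((δ : F)⁻¹) : PolyRing F n) • CliffordAlgebra.contractLeft D ω,
    C_smul_mem _ (contract_mem hω), ?_⟩
  rw [mul_smul_comm, ← h0', smul_smul, ← mul_assoc, ← C_mul, inv_mul_cancel₀ hδ, map_one, one_mul]
end

section
/- Let 𝔽_q be a finite field of characteristic p, and let f_{i_1},…,f_{i_l} (l ≥ 1) and g be homogeneous polynomials in 𝔽_q[x_1,…,x_n] with p ∤ deg g, such that f_{i_1} = ⋯ = f_{i_l} = 0 defines a smooth complete intersection of codimension l in P^{n-1} and g = f_{i_1} = ⋯ = f_{i_l} = 0 defines a smooth complete intersection of codimension l+1 in P^{n-1}. Then, over an algebraic closure of 𝔽_q, the only common zero in affine n-space of f_{i_1},…,f_{i_l} together with all (l+1) × (l+1) minors of the (l+1) × n Jacobian matrix of (g, f_{i_1},…,f_{i_l}) is the origin. Equivalently, the coefficients of the (l+1)-form dg ∧ df_{i_1} ∧ ⋯ ∧ df_{i_l} with respect to the basis of (l+1)-fold exterior products of dx_1,…,dx_n, together with f_{i_1},…,f_{i_l},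 generate an ideal of 𝔽_q[x_1,…,x_n] whose radical is (x_1,…,x_n). -/
set_option synthInstance.maxHeartbeats 1000000
set_option maxHeartbeats 1000000
open MvPolynomial

lemma euler_identity_s12 {σ : Type*} [Fintype σ] [DecidableEq σ] {R : Type*} [CommRing R]
    {f : MvPolynomial σ R} {d : ℕ} (hf : f.IsHomogeneous d) :
    ∑ j, X j * pderiv j f = (d : MvPolynomial σ R) * f := by
  conv_lhs => rw [f.as_sum]
  conv_rhs => rw [f.as_sum]
  simp only [map_sum, Finset.mul_sum]
  rw [Finset.sum_comm]
  refine Finset.sum_congr rfl fun m hm => ?_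
  have hdeg : (∑ j, m j) = d := by
    have := hf (mem_support_iff.mp hm)
    rw [Finsupp.weight_apply, Finsupp.sum_fintype] at this
    · simpa using this
    · simp
  have key : ∀ j : σ, X j * pderiv j (monomial m (coeff m f)) =
      monomial m (coeff m f * m j) := by
    intro j
    rw [pderiv_monomial, X, monomial_mul, one_mul]
    by_cases h : m j = 0
    · simp [h]
    · congr 1
      rw [add_tsub_cancel_of_le]
      rwa [Finsupp.single_le_iff, Nat.one_le_iff_ne_zero]
  calc ∑ j, X j * pderiv j (monomial m (coeff m f))
      = ∑ j, monomial m (coeff m f * m j) := Finset.sum_congr rfl fun j _ => key j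
    _ = monomial m (coeff m f * ∑ j, (m j : R)) := by
        rw [← map_sum, ← Finset.mul_sum]
    _ = (d : MvPolynomial σ R) * monomial m (coeff m f) := by
        rw [← Nat.cast_sum, hdeg, ← C_eq_coe_nat, C_mul_monomial, mul_comm]

/-- Key geometric claim in the proof of Lemma 5.9: if `f_{i_1} = ⋯ = f_{i_l} = 0` and
`g = f_{i_1} = ⋯ = f_{i_l} = 0` are smooth complete intersections in `P^{n-1}` and
`p ∤ deg g`, then the only common zero of `f_{i_1},…,f_{i_l}` (over an algebraic closure)
at which the differentials `dg, df_{i_1}, …, df_{i_l}` are linearly dependent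
(equivalently, at which all `(l+1) × (l+1)` minors of the Jacobian of
`(g, f_{i_1},…,f_{i_l})` vanish) is the origin. -/
theorem jacobian_ideal_depth {F : Type} [Field F] [Fintype F] {p n : ℕ} [CharP F p]
    (hp : p.Prime) {l : ℕ} (hl : 1 ≤ l)
    (g0 : MvPolynomial (Fin n) F) (gs : Fin l → MvPolynomial (Fin n) F)
    (d0 : ℕ) (dd : Fin l → ℕ)
    (hg0 : g0.IsHomogeneous d0) (hgs : ∀ i, (gs i).IsHomogeneous (dd i))
    (hpd : ¬ (p ∣ d0))
    (hCI : IsSmoothCI gs)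
    (hCI' : IsSmoothCI (fun i : Option (Fin l) => i.elim g0 gs)) :
    ∀ x : Fin n → AlgebraicClosure F,
      (∀ i : Fin l, MvPolynomial.eval x
        (MvPolynomial.map (algebraMap F (AlgebraicClosure F)) (gs i)) = 0) →
      ¬ LinearIndependent (AlgebraicClosure F)
        (fun i : Option (Fin l) => fun j : Fin n => MvPolynomial.eval x
          (MvPolynomial.map (algebraMap F (AlgebraicClosure F))
            (MvPolynomial.pderiv j (i.elim g0 gs)))) →
      x = 0 := by
  set K := AlgebraicClosure F
  intro x hx hdep
  set v : Option (Fin l) → Fin n → K := fun i => fun j : Fin n => MvPolynomial.eval x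
          (MvPolynomial.map (algebraMap F K) (MvPolynomial.pderiv j (i.elim g0 gs))) with hv
  by_cases hind : LinearIndependent K (fun i : Fin l => v (some i))
  · -- dg in span of the df's; deduce g0(x) = 0
    have hmem : v none ∈ Submodule.span K (Set.range (v ∘ (↑) : Fin l → Fin n → K)) := by
      by_contra hnot
      exact hdep (linearIndependent_option.mpr ⟨hind, hnot⟩)
    obtain ⟨c, hc⟩ := (Finsupp.mem_span_range_iff_exists_finsupp).mp hmem
    -- Euler evaluated: for homogeneous h of degree d, ∑ j, x j * eval(pderiv j h) = d * h(x)
    have euler_eval : ∀ (h : MvPolynomial (Fin n) F) (d : ℕ), h.IsHomogeneous d →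
        ∑ j, x j * MvPolynomial.eval x (MvPolynomial.map (algebraMap F K)
          (MvPolynomial.pderiv j h)) =
        (d : K) * MvPolynomial.eval x (MvPolynomial.map (algebraMap F K) h) := by
      intro h d hd
      have := congrArg (MvPolynomial.eval x) (euler_identity_s12 (hd.map (algebraMap F K)))
      simpa [pderiv_map] using this
    have hzero : (d0 : K) * MvPolynomial.eval x (MvPolynomial.map (algebraMap F K) g0) = 0 := by
      rw [← euler_eval g0 d0 hg0]
      have hvn : v none = fun j => MvPolynomial.eval x (MvPolynomial.map (algebraMap F K)
          (MvPolynomial.pderiv j g0)) := rfl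
      calc ∑ j, x j * MvPolynomial.eval x (MvPolynomial.map (algebraMap F K)
              (MvPolynomial.pderiv j g0))
          = ∑ j, x j * v none j := by rw [hvn]
        _ = ∑ j, x j * (∑ i ∈ c.support, c i * v (some i) j) := by
            refine Finset.sum_congr rfl fun j _ => ?_
            congr 1
            have := congrFun hc j
            simpa [Finsupp.sum_apply, Finsupp.sum] using this.symm
        _ = ∑ i ∈ c.support, c i * ∑ j, x j * v (some i) j := by
            simp only [Finset.mul_sum]
            rw [Finset.sum_comm]
            exact Finset.sum_congr rfl fun i _ => by rw [Finset.mul_sum]; exact Finset.sum_congr rfl fun j _ => by ring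
        _ = 0 := by
            refine Finset.sum_eq_zero fun i _ => ?_
            have : ∑ j, x j * v (some i) j = 0 := by
              have := euler_eval (gs i) (dd i) (hgs i)
              have h0 : MvPolynomial.eval x (MvPolynomial.map (algebraMap F K) (gs i)) = 0 := hx i
              simp only [h0, mul_zero] at this
              exact this
            rw [this, mul_zero]
    have hd0 : (d0 : K) ≠ 0 := by
      haveI : CharP K p := charP_of_injective_algebraMap (algebraMap F K).injective p
      rw [Ne, CharP.cast_eq_zero_iff K p]
      exact hpd
    have hg0x : MvPolynomial.eval x (MvPolynomial.map (algebraMap F K) g0) = 0 :=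
      (mul_eq_zero.mp hzero).resolve_left hd0
    exact hCI' x (fun i => by cases i with
      | none => exact hg0x
      | some i => exact hx i) hdep
  · exact hCI x hx hind
end
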